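/- Let N = 1 + p + q + r and write points of ℂ^N as (z, u, v, w) ∈ ℂ × ℂ^p × ℂ^q × ℂ^r, so that ℍ^N = {(z,u,v,w) : Im z > |u|² + |v|² + |w|²}. Let A ∈ ℂ^{r×r} with ρ(A) < 1 and ‖A‖ ≤ 1, b ∈ ℂ, c ∈ ℂ^r, and let ψ(z,u,v,w) = (z + 2i⟨w, c⟩ + b, u, v, A w) be a self-map of ℍ^N. Suppose M ∈ ℂ^{r×r} satisfies exp(M) = A, and for t ≥ 0 define c_t = (I − exp(M)ᴴ)^{−1}(I − exp(tM)ᴴ) c, Q_t = I − exp(tM)ᴴ exp(tM), and b_t = t b. If (1) M is dissipative, and (2) for every t ≥ 0 there exists x_t ∈ ℂ^r with Q_t x_t = c_t and t·Im(b) ≥ x_tᴴ c_t, then ψ can be embedded into a semigroup of holomorphic self-maps of ℍ^N (given explicitly by ψ_t(z,u,v,w) = (z + 2i⟨w, c_t⟩ + b_t, u, v, exp(tM) w)). -/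

import Mathlib

open Matrix Set Complex Filter

noncomputable section

/-- The Hermitian inner product `⟨x, y⟩ = ∑ j, x j * conj (y j)` on `ℂ^n`. -/
def herm {n : Type*} [Fintype n] (x y : n → ℂ) : ℂ :=
  ∑ j, x j * (starRingEnd ℂ) (y j)

/-- The squared Euclidean norm on `ℂ^n`. -/
def enormSq {n : Type*} [Fintype n] (x : n → ℂ) : ℝ :=
  ∑ j, ‖x j‖ ^ 2

/-- The operator (spectral) norm of `A` is at most `1`. -/
def OpNormLeOne {n : Type*} [Fintype n] (A : Matrix n n ℂ) : Prop :=
  ∀ x : n → ℂ, enormSq (A.mulVec x) ≤ enormSq x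

/-- A matrix `M` is dissipative if `Re (wᴴ M w) ≤ 0` for all vectors `w`. -/
def Dissipative {n : Type*} [Fintype n] (M : Matrix n n ℂ) : Prop :=
  ∀ w : n → ℂ, (herm (M.mulVec w) w).re ≤ 0

/-- `(φ t)_{t ≥ 0}` is a (continuous) semigroup of holomorphic self-maps of `U`. -/
def IsHolSemigroupOn {E : Type*} [NormedAddCommGroup E] [NormedSpace ℂ E]
    (U : Set E) (φ : ℝ → E → E) : Prop :=
  (∀ t : ℝ, 0 ≤ t → MapsTo (φ t) U U) ∧
  (∀ t : ℝ, 0 ≤ t → DifferentiableOn ℂ (φ t) U) ∧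
  (∀ z ∈ U, φ 0 z = z) ∧
  (∀ s : ℝ, 0 ≤ s → ∀ t : ℝ, 0 ≤ t → ∀ z ∈ U, φ (s + t) z = φ s (φ t z)) ∧
  (∀ K : Set E, K ⊆ U → IsCompact K →
    TendstoUniformlyOn (fun t => φ t) id (nhdsWithin 0 (Ioi 0)) K)

/-- `ℂ^N = ℂ × ℂ^p × ℂ^q × ℂ^r`. -/
abbrev E4 (p q r : ℕ) : Type := ℂ × (Fin p → ℂ) × (Fin q → ℂ) × (Fin r → ℂ)

/-- The Siegel half-plane `ℍ^N = {(z,u,v,w) : Im z > |u|² + |v|² + |w|²}`. -/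
def Siegel4 (p q r : ℕ) : Set (E4 p q r) :=
  {x | enormSq x.2.1 + enormSq x.2.2.1 + enormSq x.2.2.2 < x.1.im}

/-- `c_t = (I - exp(M)ᴴ)⁻¹ (I - exp(tM)ᴴ) c`. -/
def ct {r : ℕ} (M : Matrix (Fin r) (Fin r) ℂ) (c : Fin r → ℂ) (t : ℝ) : Fin r → ℂ :=
  (((1 : Matrix (Fin r) (Fin r) ℂ) - (NormedSpace.exp M)ᴴ)⁻¹ *
    ((1 : Matrix (Fin r) (Fin r) ℂ) - (NormedSpace.exp ((t : ℂ) • M))ᴴ)).mulVec c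

/-- `Q_t = I - exp(tM)ᴴ exp(tM)`. -/
def Qt {r : ℕ} (M : Matrix (Fin r) (Fin r) ℂ) (t : ℝ) : Matrix (Fin r) (Fin r) ℂ :=
  (1 : Matrix (Fin r) (Fin r) ℂ)
    - (NormedSpace.exp ((t : ℂ) • M))ᴴ * NormedSpace.exp ((t : ℂ) • M)


variable {n : Type*} [Fintype n]

lemma herm_conj (x y : n → ℂ) : herm y x = (starRingEnd ℂ) (herm x y) := by
  simp [herm, map_sum, mul_comm]

lemma herm_add_left (x x' y : n → ℂ) : herm (x + x') y = herm x y + herm x' y := by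
  simp [herm, add_mul, Finset.sum_add_distrib]

lemma herm_add_right (x y y' : n → ℂ) : herm x (y + y') = herm x y + herm x y' := by
  simp [herm, mul_add, Finset.sum_add_distrib]

lemma herm_sub_left (x x' y : n → ℂ) : herm (x - x') y = herm x y - herm x' y := by
  simp [herm, sub_mul, Finset.sum_sub_distrib]

lemma herm_zero_right (x : n → ℂ) : herm x 0 = 0 := by simp [herm]

lemma herm_self (x : n → ℂ) : herm x x = (enormSq x : ℝ) := by
  simp only [herm, enormSq, Complex.mul_conj]
  push_cast
  refine Finset.sum_congr rfl fun j _ => ?_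
  rw [← Complex.sq_norm]
  push_cast
  ring

lemma herm_mulVec_left (A : Matrix n n ℂ) (x y : n → ℂ) :
    herm (A.mulVec x) y = herm x (Aᴴ.mulVec y) := by
  simp only [herm, Matrix.mulVec, dotProduct, conjTranspose_apply, map_sum, _root_.map_mul,
    starRingEnd_self_apply, star_star, Finset.sum_mul, Finset.mul_sum]
  rw [Finset.sum_comm]
  refine Finset.sum_congr rfl fun i _ => Finset.sum_congr rfl fun j _ => ?_
  simp only [starRingEnd_apply, star_star]
  ring

lemma herm_norm_le (x y : n → ℂ) : ‖herm x y‖ ≤ (Fintype.card n) * ‖x‖ * ‖y‖ := by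
  calc ‖herm x y‖ ≤ ∑ j, ‖x j * (starRingEnd ℂ) (y j)‖ := norm_sum_le _ _
  _ ≤ ∑ _j : n, ‖x‖ * ‖y‖ := by
      refine Finset.sum_le_sum fun j _ => ?_
      rw [norm_mul, RingHomIsometric.norm_map]
      exact mul_le_mul (norm_le_pi_norm x j) (norm_le_pi_norm y j) (norm_nonneg _) (norm_nonneg _)
  _ = (Fintype.card n) * ‖x‖ * ‖y‖ := by simp [Finset.card_univ, mul_assoc]

section MatrixExp

attribute [local instance] Matrix.linftyOpNormedAddCommGroup Matrix.linftyOpNormedRing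
  Matrix.linftyOpNormedAlgebra

variable {r : ℕ} (M : Matrix (Fin r) (Fin r) ℂ)

/-- abbreviation for exp(tM) -/
def Et (t : ℝ) : Matrix (Fin r) (Fin r) ℂ := NormedSpace.exp ((t : ℂ) • M)

lemma Et_zero : Et M 0 = 1 := by
  simp [Et, NormedSpace.exp_zero]

lemma Et_one : Et M 1 = NormedSpace.exp M := by
  simp [Et]

lemma Et_add (s t : ℝ) : Et M (s + t) = Et M s * Et M t := by
  rw [Et, Et, Et, Complex.ofReal_add, add_smul]
  exact NormedSpace.exp_add_of_commute (((Commute.refl M).smul_left _).smul_right _)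

lemma Et_commute (s t : ℝ) : Commute (Et M s) (Et M t) :=
  (((Commute.refl M).smul_left ((s:ℂ))).smul_right ((t:ℂ))).exp

lemma Et_continuous : Continuous (fun t : ℝ => Et M t) :=
  NormedSpace.exp_continuous.comp (Complex.continuous_ofReal.smul continuous_const)

lemma Et_hasDerivAt (t : ℝ) :
    HasDerivAt (fun t : ℝ => Et M t) (Et M t * M) t := by
  have h := hasDerivAt_exp_smul_const (𝕂 := ℂ) M ((t : ℂ))
  have hh : HasDerivAt (fun y : ℝ => (y : ℂ)) 1 t := by
    simpa using (hasDerivAt_id t).ofReal_comp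
  have h2 := HasDerivAt.scomp (h := fun y : ℝ => (y : ℂ)) (x := t) h hh
  simp only [one_smul, Function.comp_def] at h2
  exact h2

end MatrixExp

section Contract

attribute [local instance] Matrix.linftyOpNormedAddCommGroup Matrix.linftyOpNormedRing
  Matrix.linftyOpNormedAlgebra

variable {r : ℕ} (M : Matrix (Fin r) (Fin r) ℂ)

/-- `N ↦ N.mulVec w` as a continuous linear map. -/
def mulVecCLM (w : Fin r → ℂ) : Matrix (Fin r) (Fin r) ℂ →L[ℂ] (Fin r → ℂ) :=
  LinearMap.toContinuousLinearMap
    { toFun := fun N => N.mulVec w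
      map_add' := fun N1 N2 => Matrix.add_mulVec N1 N2 w
      map_smul' := fun a N => Matrix.smul_mulVec a N w }

lemma yt_hasDerivAt (w : Fin r → ℂ) (t : ℝ) :
    HasDerivAt (fun t : ℝ => (Et M t).mulVec w)
      (M.mulVec ((Et M t).mulVec w)) t := by
  have h := ((mulVecCLM w).restrictScalars ℝ).hasFDerivAt.comp_hasDerivAt t (Et_hasDerivAt M t)
  have hcomm : Et M t * M = M * Et M t :=
    ((((Commute.refl M).smul_left ((t:ℂ))).exp_left)).eq
  have h3 : ((mulVecCLM w).restrictScalars ℝ) (Et M t * M) = M.mulVec ((Et M t).mulVec w) := by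
    rw [ContinuousLinearMap.coe_restrictScalars', hcomm]
    simp [mulVecCLM, Matrix.mulVec_mulVec]
  rw [← h3]
  exact h

lemma enormSq_Et_hasDerivAt (w : Fin r → ℂ) (t : ℝ) :
    HasDerivAt (fun t : ℝ => enormSq ((Et M t).mulVec w))
      (2 * (herm (M.mulVec ((Et M t).mulVec w)) ((Et M t).mulVec w)).re) t := by
  have hy := yt_hasDerivAt M w t
  set y : ℝ → (Fin r → ℂ) := fun t => (Et M t).mulVec w with hydef
  set d : Fin r → ℂ := M.mulVec ((Et M t).mulVec w) with hddef
  have hcomp : ∀ j : Fin r, HasDerivAt (fun t => y t j) (d j) t := by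
    intro j
    exact ((ContinuousLinearMap.proj (R := ℂ) (φ := fun _ : Fin r => ℂ)
      j).restrictScalars ℝ).hasFDerivAt.comp_hasDerivAt t hy
  have hsq : ∀ j : Fin r, HasDerivAt (fun t => ‖y t j‖ ^ 2)
      (2 * ((d j) * (starRingEnd ℂ) (y t j)).re) t := by
    intro j
    have hre : HasDerivAt (fun t => (y t j).re) ((d j).re) t :=
      Complex.reCLM.hasFDerivAt.comp_hasDerivAt t (hcomp j)
    have him : HasDerivAt (fun t => (y t j).im) ((d j).im) t :=
      Complex.imCLM.hasFDerivAt.comp_hasDerivAt t (hcomp j)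
    have h : HasDerivAt (fun t => (y t j).re * (y t j).re + (y t j).im * (y t j).im) _ t :=
        (hre.mul hre).add (him.mul him)
    have heq : (fun t => (y t j).re * (y t j).re + (y t j).im * (y t j).im)
        = fun t => ‖y t j‖ ^ 2 := by
      funext s
      rw [← Complex.normSq_apply, ← Complex.sq_norm]
    rw [heq] at h
    convert h using 1
    simp only [Complex.mul_re, Complex.conj_re, Complex.conj_im]
    ring
  have hsum := HasDerivAt.fun_sum (fun j (_ : j ∈ Finset.univ) => hsq j)
  have h4 : (fun t => ∑ j, ‖y t j‖ ^ 2) = fun t => enormSq (y t) := rfl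
  rw [h4] at hsum
  refine hsum.congr_deriv ?_
  simp [herm, Complex.re_sum, Finset.mul_sum]
  rfl

lemma enormSq_Et_le (hdis : ∀ w : Fin r → ℂ, (herm (M.mulVec w) w).re ≤ 0) (w : Fin r → ℂ) {t : ℝ} (ht : 0 ≤ t) :
    enormSq ((Et M t).mulVec w) ≤ enormSq w := by
  set f : ℝ → ℝ := fun t => enormSq ((Et M t).mulVec w) with hf
  have hmono : AntitoneOn f (Ici (0:ℝ)) := by
    apply antitoneOn_of_deriv_nonpos (convex_Ici 0)
    · exact Continuous.continuousOn (continuous_iff_continuousAt.2 fun s =>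
        (enormSq_Et_hasDerivAt M w s).differentiableAt.continuousAt)
    · intro s _
      exact (enormSq_Et_hasDerivAt M w s).differentiableAt.differentiableWithinAt
    · intro s _
      rw [(enormSq_Et_hasDerivAt M w s).deriv]
      have := hdis ((Et M s).mulVec w)
      linarith
  have h0 : f 0 = enormSq w := by simp [hf, Et_zero]
  calc f t ≤ f 0 := hmono (self_mem_Ici) ht ht
  _ = enormSq w := h0

section QtCt
variable {r : ℕ} (M : Matrix (Fin r) (Fin r) ℂ)

lemma Qt_eq (t : ℝ) : Qt M t = 1 - (Et M t)ᴴ * Et M t := rfl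

lemma herm_Qt (t : ℝ) (v : Fin r → ℂ) :
    herm ((Qt M t).mulVec v) v =
      ((enormSq v - enormSq ((Et M t).mulVec v) : ℝ) : ℂ) := by
  rw [Qt_eq, Matrix.sub_mulVec, Matrix.one_mulVec, herm_sub_left,
    ← Matrix.mulVec_mulVec, herm_mulVec_left, conjTranspose_conjTranspose,
    herm_self, herm_self]
  push_cast
  ring

lemma Qt_conjTranspose (t : ℝ) : (Qt M t)ᴴ = Qt M t := by
  simp [Qt_eq, conjTranspose_sub, conjTranspose_mul]

lemma key_ineq (hdis : ∀ w : Fin r → ℂ, (herm (M.mulVec w) w).re ≤ 0)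
    {t : ℝ} (ht : 0 ≤ t) (w x : Fin r → ℂ) :
    enormSq ((Et M t).mulVec w) ≤
      enormSq w + 2 * (herm ((Qt M t).mulVec x) w).re
        + (herm ((Qt M t).mulVec x) x).re := by
  have hpsd : 0 ≤ (herm ((Qt M t).mulVec (w + x)) (w + x)).re := by
    rw [herm_Qt]
    have := enormSq_Et_le M hdis (w + x) ht
    simpa using by linarith
  have hexp : herm ((Qt M t).mulVec (w + x)) (w + x)
      = herm ((Qt M t).mulVec w) w + herm ((Qt M t).mulVec w) x
        + herm ((Qt M t).mulVec x) w + herm ((Qt M t).mulVec x) x := by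
    rw [Matrix.mulVec_add, herm_add_left, herm_add_right, herm_add_right]
    ring
  have hsym : (herm ((Qt M t).mulVec w) x).re = (herm ((Qt M t).mulVec x) w).re := by
    have h1 : herm ((Qt M t).mulVec w) x = (starRingEnd ℂ) (herm x ((Qt M t).mulVec w)) :=
      herm_conj _ _
    have h2 : herm ((Qt M t).mulVec x) w = herm x ((Qt M t).mulVec w) := by
      rw [herm_mulVec_left, Qt_conjTranspose]
    rw [h1, h2, Complex.conj_re]
  have hQw : (herm ((Qt M t).mulVec w) w).re
      = enormSq w - enormSq ((Et M t).mulVec w) := by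
    rw [herm_Qt]; simp
  have := congrArg Complex.re hexp
  simp only [Complex.add_re] at this
  linarith [hpsd, this.symm ▸ hpsd]

end QtCt

section CtLemmas
variable {r : ℕ} (M : Matrix (Fin r) (Fin r) ℂ) (c : Fin r → ℂ)

lemma det_isUnit (A : Matrix (Fin r) (Fin r) ℂ)
    (hAspec : ∀ μ ∈ spectrum ℂ A, ‖μ‖ < 1) :
    IsUnit ((1 : Matrix (Fin r) (Fin r) ℂ) - Aᴴ).det := by
  have h1 : (1 : ℂ) ∉ spectrum ℂ A := fun h => by simpa using hAspec 1 h
  have h2 : IsUnit ((1 : Matrix (Fin r) (Fin r) ℂ) - A) := by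
    have := spectrum.notMem_iff.mp h1
    simpa using this
  have h3 : IsUnit ((1 : Matrix (Fin r) (Fin r) ℂ) - A).det :=
    (Matrix.isUnit_iff_isUnit_det _).mp h2
  have h4 : ((1 : Matrix (Fin r) (Fin r) ℂ) - Aᴴ) = ((1 : Matrix (Fin r) (Fin r) ℂ) - A)ᴴ := by
    simp [conjTranspose_sub]
  rw [h4, Matrix.det_conjTranspose]
  exact h3.star

lemma ct_zero : ct M c 0 = 0 := by
  have : NormedSpace.exp (((0:ℝ) : ℂ) • M) = 1 := Et_zero M
  simp [ct, this]

lemma ct_one (hdet : IsUnit ((1 : Matrix (Fin r) (Fin r) ℂ) - (NormedSpace.exp M)ᴴ).det) :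
    ct M c 1 = c := by
  have h1 : NormedSpace.exp (((1:ℝ) : ℂ) • M) = NormedSpace.exp M := by norm_num
  rw [ct, h1, Matrix.nonsing_inv_mul _ hdet, Matrix.one_mulVec]

lemma commute_D (t : ℝ) :
    Commute ((Et M t)ᴴ) ((1 : Matrix (Fin r) (Fin r) ℂ) - (NormedSpace.exp M)ᴴ) := by
  have h0 : Commute (Et M t) (NormedSpace.exp M) := by
    rw [← Et_one M]; exact Et_commute M t 1
  have h1 : Commute ((Et M t)ᴴ) ((NormedSpace.exp M)ᴴ) := by
    unfold Commute SemiconjBy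
    rw [← conjTranspose_mul, ← conjTranspose_mul, h0.symm.eq]
  exact (Commute.one_right _).sub_right h1

lemma commute_Dinv (t : ℝ)
    (hdet : IsUnit ((1 : Matrix (Fin r) (Fin r) ℂ) - (NormedSpace.exp M)ᴴ).det) :
    (Et M t)ᴴ * ((1 : Matrix (Fin r) (Fin r) ℂ) - (NormedSpace.exp M)ᴴ)⁻¹
      = ((1 : Matrix (Fin r) (Fin r) ℂ) - (NormedSpace.exp M)ᴴ)⁻¹ * (Et M t)ᴴ := by
  set D := (1 : Matrix (Fin r) (Fin r) ℂ) - (NormedSpace.exp M)ᴴ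
  have h1 : D⁻¹ * D = 1 := Matrix.nonsing_inv_mul D hdet
  have h2 : D * D⁻¹ = 1 := Matrix.mul_nonsing_inv D hdet
  calc (Et M t)ᴴ * D⁻¹ = D⁻¹ * D * ((Et M t)ᴴ * D⁻¹) := by rw [h1, one_mul]
  _ = D⁻¹ * ((Et M t)ᴴ * D) * D⁻¹ := by
      have hc := (commute_D M t).eq
      rw [show D⁻¹ * D * ((Et M t)ᴴ * D⁻¹) = D⁻¹ * (D * (Et M t)ᴴ) * D⁻¹ by noncomm_ring, hc]
  _ = D⁻¹ * (Et M t)ᴴ * (D * D⁻¹) := by noncomm_ring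
  _ = D⁻¹ * (Et M t)ᴴ := by rw [h2, mul_one]

lemma ct_add (s t : ℝ)
    (hdet : IsUnit ((1 : Matrix (Fin r) (Fin r) ℂ) - (NormedSpace.exp M)ᴴ).det) :
    ct M c (s + t) = ct M c t + (Et M t)ᴴ.mulVec (ct M c s) := by
  set D := (1 : Matrix (Fin r) (Fin r) ℂ) - (NormedSpace.exp M)ᴴ with hD
  have hEst : (NormedSpace.exp (((s + t : ℝ) : ℂ) • M))ᴴ = (Et M t)ᴴ * (Et M s)ᴴ := by
    show (Et M (s + t))ᴴ = _
    rw [Et_add, conjTranspose_mul]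
  have hmat : D⁻¹ * (1 - (Et M (s+t))ᴴ)
      = D⁻¹ * (1 - (Et M t)ᴴ) + (Et M t)ᴴ * (D⁻¹ * (1 - (Et M s)ᴴ)) := by
    have h5 : (Et M (s+t))ᴴ = (Et M t)ᴴ * (Et M s)ᴴ := by
      rw [Et_add, conjTranspose_mul]
    rw [h5, ← mul_assoc, commute_Dinv M t hdet, mul_assoc, ← mul_add D⁻¹]
    congr 1
    noncomm_ring
  have hl : ct M c (s + t) = (D⁻¹ * (1 - (Et M (s+t))ᴴ)).mulVec c := rfl
  have hr : ct M c t = (D⁻¹ * (1 - (Et M t)ᴴ)).mulVec c := rfl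
  have hs' : ct M c s = (D⁻¹ * (1 - (Et M s)ᴴ)).mulVec c := rfl
  rw [hl, hr, hs', hmat, Matrix.add_mulVec, Matrix.mulVec_mulVec]

end CtLemmas

section ContBounds
attribute [local instance] Matrix.linftyOpNormedAddCommGroup Matrix.linftyOpNormedRing
  Matrix.linftyOpNormedAlgebra

variable {r : ℕ} (M : Matrix (Fin r) (Fin r) ℂ) (c : Fin r → ℂ)

lemma ct_continuous : Continuous (fun t : ℝ => ct M c t) := by
  unfold ct
  exact Continuous.matrix_mulVec
    (Continuous.matrix_mul continuous_const
      (continuous_const.sub (Et_continuous M).matrix_conjTranspose))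
    continuous_const

lemma mulVec_norm_le (A : Matrix (Fin r) (Fin r) ℂ) (v : Fin r → ℂ) :
    ‖A.mulVec v‖ ≤ ‖A‖ * ‖v‖ := Matrix.linfty_opNorm_mulVec A v

lemma dist_Et_one_tendsto :
    Tendsto (fun t : ℝ => ‖(1 : Matrix (Fin r) (Fin r) ℂ) - Et M t‖) (nhds 0) (nhds 0) := by
  have h : Continuous fun t : ℝ => ‖(1 : Matrix (Fin r) (Fin r) ℂ) - Et M t‖ :=
    (continuous_const.sub (Et_continuous M)).norm
  have h0 : ‖(1 : Matrix (Fin r) (Fin r) ℂ) - Et M 0‖ = 0 := by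
    simp [Et_zero]
  simpa [h0] using h.tendsto 0

lemma ct_norm_tendsto :
    Tendsto (fun t : ℝ => ‖ct M c t‖) (nhds 0) (nhds 0) := by
  have h : Continuous fun t : ℝ => ‖ct M c t‖ := (ct_continuous M c).norm
  have h0 : ‖ct M c 0‖ = 0 := by simp [ct_zero]
  simpa [h0] using h.tendsto 0

end ContBounds

section Diff
variable {r : ℕ}

lemma herm_differentiable (d : Fin r → ℂ) :
    Differentiable ℂ (fun w : Fin r → ℂ => herm w d) := by
  unfold herm
  exact Differentiable.fun_sum fun j _ =>
    ((ContinuousLinearMap.proj (R := ℂ) (φ := fun _ : Fin r => ℂ) j).differentiable).mul_const _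

lemma mulVec_differentiable (A : Matrix (Fin r) (Fin r) ℂ) :
    Differentiable ℂ (fun w : Fin r → ℂ => A.mulVec w) := by
  rw [differentiable_pi]
  intro i
  have : (fun w : Fin r → ℂ => A.mulVec w i) = fun w => ∑ j, A i j * w j := by
    funext w
    simp [Matrix.mulVec, dotProduct]
  rw [this]
  exact Differentiable.fun_sum fun j _ =>
    ((ContinuousLinearMap.proj (R := ℂ) (φ := fun _ : Fin r => ℂ) j).differentiable).const_mul _

end Diff

section Main
attribute [local instance] Matrix.linftyOpNormedAddCommGroup Matrix.linftyOpNormedRing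
  Matrix.linftyOpNormedAlgebra

/-- Let `ψ(z,u,v,w) = (z + 2i⟨w,c⟩ + b, u, v, Aw)` be a parabolic self-map of the
Siegel half-plane, with `ρ(A) < 1`, `‖A‖ ≤ 1`, and `exp M = A`. If `M` is
dissipative and for every `t ≥ 0` the vector `c_t` is in the range of `Q_t` with
`t Im b ≥ x_tᴴ c_t`, then `ψ` embeds into a semigroup of holomorphic self-maps of
`ℍ^N`. -/
theorem stmt8 {p q r : ℕ}
    (A : Matrix (Fin r) (Fin r) ℂ)
    (hAspec : ∀ μ ∈ spectrum ℂ A, ‖μ‖ < 1) (hAnorm : OpNormLeOne A)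
    (b : ℂ) (c : Fin r → ℂ)
    (ψ : E4 p q r → E4 p q r)
    (hψ : ∀ x, ψ x = (x.1 + 2 * Complex.I * herm x.2.2.2 c + b,
      x.2.1, x.2.2.1, A.mulVec x.2.2.2))
    (hself : MapsTo ψ (Siegel4 p q r) (Siegel4 p q r))
    (M : Matrix (Fin r) (Fin r) ℂ) (hM : NormedSpace.exp M = A)
    (hdis : Dissipative M)
    (hcond : ∀ t : ℝ, 0 ≤ t → ∃ x : Fin r → ℂ,
      (Qt M t).mulVec x = ct M c t ∧ t * b.im ≥ (herm (ct M c t) x).re) :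
    ∃ φt : ℝ → E4 p q r → E4 p q r,
      IsHolSemigroupOn (Siegel4 p q r) φt ∧ ∀ z ∈ Siegel4 p q r, φt 1 z = ψ z := by
  classical
  have hdet : IsUnit ((1 : Matrix (Fin r) (Fin r) ℂ) - (NormedSpace.exp M)ᴴ).det := by
    rw [hM]; exact det_isUnit A hAspec
  set φt : ℝ → E4 p q r → E4 p q r := fun t x =>
    (x.1 + 2 * Complex.I * herm x.2.2.2 (ct M c t) + (t : ℂ) * b,
      x.2.1, x.2.2.1, (Et M t).mulVec x.2.2.2) with hφ
  refine ⟨φt, ⟨?_, ?_, ?_, ?_, ?_⟩, ?_⟩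
  · -- MapsTo
    intro t ht x hx
    obtain ⟨x0, hx0, hx0'⟩ := hcond t ht
    have key := key_ineq M hdis ht x.2.2.2 x0
    rw [hx0] at key
    have him : (x.1 + 2 * Complex.I * herm x.2.2.2 (ct M c t) + (t : ℂ) * b).im
        = x.1.im + 2 * (herm x.2.2.2 (ct M c t)).re + t * b.im := by
      simp [Complex.add_im, Complex.mul_im, Complex.mul_re]
      try ring
    have hsym : (herm x.2.2.2 (ct M c t)).re = (herm (ct M c t) x.2.2.2).re := by
      rw [herm_conj x.2.2.2 (ct M c t)]; exact (Complex.conj_re _).symm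
    have hx' : enormSq x.2.1 + enormSq x.2.2.1 + enormSq x.2.2.2 < x.1.im := hx
    show enormSq x.2.1 + enormSq x.2.2.1 + enormSq ((Et M t).mulVec x.2.2.2)
        < (x.1 + 2 * Complex.I * herm x.2.2.2 (ct M c t) + (t : ℂ) * b).im
    rw [him]
    have hge : t * b.im ≥ (herm (ct M c t) x0).re := hx0'
    linarith [hsym, key, hge]
  · -- Differentiable
    intro t _
    have hw : Differentiable ℂ (fun x : E4 p q r => x.2.2.2) := by fun_prop
    have h1 : Differentiable ℂ (fun x : E4 p q r =>
        x.1 + 2 * Complex.I * herm x.2.2.2 (ct M c t) + (t : ℂ) * b) := by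
      refine Differentiable.add_const _ ?_
      refine differentiable_fst.add ?_
      exact ((herm_differentiable (ct M c t)).comp hw).const_mul _
    have h4 : Differentiable ℂ (fun x : E4 p q r => (Et M t).mulVec x.2.2.2) :=
      (mulVec_differentiable (Et M t)).comp hw
    have h2 : Differentiable ℂ (fun x : E4 p q r => x.2.1) := by fun_prop
    have h3 : Differentiable ℂ (fun x : E4 p q r => x.2.2.1) := by fun_prop
    exact (h1.prodMk (h2.prodMk (h3.prodMk h4))).differentiableOn
  · -- identity at 0
    intro z _
    show (z.1 + 2 * Complex.I * herm z.2.2.2 (ct M c 0) + ((0:ℝ) : ℂ) * b,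
      z.2.1, z.2.2.1, (Et M 0).mulVec z.2.2.2) = z
    rw [ct_zero, Et_zero, herm_zero_right, Matrix.one_mulVec]
    simp
  · -- semigroup law
    intro s hs t ht x hx
    show (x.1 + 2 * Complex.I * herm x.2.2.2 (ct M c (s + t)) + ((s+t : ℝ) : ℂ) * b,
      x.2.1, x.2.2.1, (Et M (s+t)).mulVec x.2.2.2) = φt s (φt t x)
    have h4 : (Et M (s+t)).mulVec x.2.2.2 = (Et M s).mulVec ((Et M t).mulVec x.2.2.2) := by
      rw [Et_add, ← Matrix.mulVec_mulVec]
    have hherm : herm ((Et M t).mulVec x.2.2.2) (ct M c s)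
        = herm x.2.2.2 ((Et M t)ᴴ.mulVec (ct M c s)) := herm_mulVec_left _ _ _
    have h1 : x.1 + 2 * Complex.I * herm x.2.2.2 (ct M c (s + t)) + ((s+t : ℝ) : ℂ) * b
        = (x.1 + 2 * Complex.I * herm x.2.2.2 (ct M c t) + (t : ℂ) * b)
          + 2 * Complex.I * herm ((Et M t).mulVec x.2.2.2) (ct M c s) + (s : ℂ) * b := by
      rw [hherm, ct_add M c s t hdet, herm_add_right]
      push_cast
      ring
    show _ = ((x.1 + 2 * Complex.I * herm x.2.2.2 (ct M c t) + (t : ℂ) * b)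
          + 2 * Complex.I * herm ((Et M t).mulVec x.2.2.2) (ct M c s) + (s : ℂ) * b,
      x.2.1, x.2.2.1, (Et M s).mulVec ((Et M t).mulVec x.2.2.2))
    rw [h1, h4]
  · -- uniform convergence
    intro K hK hKc
    rw [Metric.tendstoUniformlyOn_iff]
    intro ε hε
    obtain ⟨R, hR⟩ := hKc.isBounded.subset_closedBall 0
    set R' : ℝ := max R 1 with hR'
    have hR'pos : (0:ℝ) < R' := lt_of_lt_of_le one_pos (le_max_right _ _)
    have hRw : ∀ x ∈ K, ‖x.2.2.2‖ ≤ R' := by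
      intro x hx
      have h1 : ‖x‖ ≤ R := by
        have := hR hx
        simpa [Metric.mem_closedBall, dist_zero_right] using this
      calc ‖x.2.2.2‖ ≤ ‖x.2.2‖ := norm_snd_le _
        _ ≤ ‖x.2‖ := norm_snd_le _
        _ ≤ ‖x‖ := norm_snd_le _
        _ ≤ R' := le_trans h1 (le_max_left _ _)
    have hg1 : Tendsto (fun t : ℝ => 2*((r:ℝ)*‖ct M c t‖*R') + |t| * ‖b‖)
        (nhdsWithin 0 (Ioi 0)) (nhds 0) := by
      have hc : Continuous fun t : ℝ => 2*((r:ℝ)*‖ct M c t‖*R') + |t| * ‖b‖ := by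
        have := (ct_continuous M c).norm
        fun_prop
      have h0 := hc.tendsto 0
      rw [show (2*((r:ℝ)*‖ct M c 0‖*R') + |(0:ℝ)| * ‖b‖) = 0 by simp [ct_zero]] at h0
      exact h0.mono_left nhdsWithin_le_nhds
    have hg2 : Tendsto (fun t : ℝ => ‖(1 : Matrix (Fin r) (Fin r) ℂ) - Et M t‖ * R')
        (nhdsWithin 0 (Ioi 0)) (nhds 0) := by
      have hc : Continuous fun t : ℝ => ‖(1 : Matrix (Fin r) (Fin r) ℂ) - Et M t‖ * R' :=
        ((continuous_const.sub (Et_continuous M)).norm).mul continuous_const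
      have h0 := hc.tendsto 0
      rw [show (‖(1 : Matrix (Fin r) (Fin r) ℂ) - Et M 0‖ * R') = 0 by simp [Et_zero]] at h0
      exact h0.mono_left nhdsWithin_le_nhds
    filter_upwards [hg1.eventually_lt_const hε, hg2.eventually_lt_const hε] with t h1 h2
    intro x hx
    have hb1 : dist x.1 (φt t x).1 ≤ 2*((r:ℝ)*‖ct M c t‖*R') + |t| * ‖b‖ := by
      show dist x.1 (x.1 + 2 * Complex.I * herm x.2.2.2 (ct M c t) + (t : ℂ) * b) ≤ _
      rw [add_assoc, dist_self_add_right]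
      calc ‖2 * Complex.I * herm x.2.2.2 (ct M c t) + (t : ℂ) * b‖
          ≤ ‖2 * Complex.I * herm x.2.2.2 (ct M c t)‖ + ‖(t : ℂ) * b‖ := norm_add_le _ _
        _ ≤ 2*((r:ℝ)*‖ct M c t‖*R') + |t| * ‖b‖ := by
            have e1 : ‖2 * Complex.I * herm x.2.2.2 (ct M c t)‖
                = 2 * ‖herm x.2.2.2 (ct M c t)‖ := by
              rw [norm_mul, norm_mul, Complex.norm_I]
              norm_num
            have e2 : ‖(t : ℂ) * b‖ = |t| * ‖b‖ := by
              rw [norm_mul, Complex.norm_real, Real.norm_eq_abs]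
            rw [e1, e2]
            have hb := herm_norm_le x.2.2.2 (ct M c t)
            have hw := hRw x hx
            have hcard : (Fintype.card (Fin r) : ℝ) = (r : ℝ) := by simp
            rw [hcard] at hb
            have hm : (r:ℝ) * ‖x.2.2.2‖ * ‖ct M c t‖ ≤ (r:ℝ) * ‖ct M c t‖ * R' := by
              have := mul_le_mul_of_nonneg_left hw
                (mul_nonneg (Nat.cast_nonneg r) (norm_nonneg (ct M c t)))
              nlinarith
            linarith
    have hb4 : dist x.2.2.2 (φt t x).2.2.2 ≤ ‖(1 : Matrix (Fin r) (Fin r) ℂ) - Et M t‖ * R' := by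
      show dist x.2.2.2 ((Et M t).mulVec x.2.2.2) ≤ _
      rw [dist_eq_norm]
      have e : x.2.2.2 - (Et M t).mulVec x.2.2.2
          = ((1 : Matrix (Fin r) (Fin r) ℂ) - Et M t).mulVec x.2.2.2 := by
        rw [Matrix.sub_mulVec, Matrix.one_mulVec]
      rw [e]
      calc ‖((1 : Matrix (Fin r) (Fin r) ℂ) - Et M t).mulVec x.2.2.2‖
          ≤ ‖(1 : Matrix (Fin r) (Fin r) ℂ) - Et M t‖ * ‖x.2.2.2‖ :=
            Matrix.linfty_opNorm_mulVec _ _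
        _ ≤ _ := mul_le_mul_of_nonneg_left (hRw x hx) (norm_nonneg _)
    have hd : dist (id x) (φt t x)
        = max (dist x.1 (φt t x).1) (max (dist x.2.1 (φt t x).2.1)
            (max (dist x.2.2.1 (φt t x).2.2.1) (dist x.2.2.2 (φt t x).2.2.2))) := by
      rw [Prod.dist_eq, Prod.dist_eq, Prod.dist_eq]
      rfl
    rw [hd]
    have hz2 : dist x.2.1 (φt t x).2.1 = 0 := by simp [hφ]
    have hz3 : dist x.2.2.1 (φt t x).2.2.1 = 0 := by simp [hφ]
    rw [hz2, hz3]
    exact max_lt (lt_of_le_of_lt hb1 h1)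
      (max_lt hε (max_lt hε (lt_of_le_of_lt hb4 h2)))
  · -- time one
    intro z _
    rw [hψ]
    show (z.1 + 2 * Complex.I * herm z.2.2.2 (ct M c 1) + ((1:ℝ) : ℂ) * b,
      z.2.1, z.2.2.1, (Et M 1).mulVec z.2.2.2) = _
    rw [ct_one M c hdet, Et_one, hM]
    norm_num
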